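/- Let L be a left-symmetric algebra whose associated Lie algebra g is simple (and finite-dimensional). Then there is no element e ∈ g with ρ(e) = id, i.e., no element e such that e·y = y for all y. -/

import Mathlib

/-- If `L` is a left-symmetric algebra whose associated Lie algebra `g` is simple and
finite dimensional, then there is no element `e` with `ρ(e) = id`, i.e. no `e` with
`e · y = y` for all `y`. -/
theorem lsa_simple_no_left_identity
    (K L : Type*) [Field K] [CharZero K] [LieRing L] [LieAlgebra K L]
    [FiniteDimensional K L] [LieAlgebra.IsSimple K L]
    (mul : L →ₗ[K] L →ₗ[K] L)
    (hlsa : ∀ x y z : L,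
      mul (mul x y) z - mul x (mul y z) = mul (mul y x) z - mul y (mul x z))
    (hcompat : ∀ x y : L, mul x y - mul y x = ⁅x, y⁆) :
    ¬ ∃ e : L, ∀ y : L, mul e y = y := by
  rintro ⟨e, he⟩
  -- ρ is a representation: mul ⁅x,y⁆ z = mul x (mul y z) - mul y (mul x z)
  have hrep : ∀ x y z : L, mul ⁅x, y⁆ z = mul x (mul y z) - mul y (mul x z) := by
    intro x y z
    have h1 := hlsa x y z
    have h2 : mul ⁅x, y⁆ z = mul (mul x y) z - mul (mul y x) z := by
      rw [← hcompat x y, map_sub, LinearMap.sub_apply]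
    rw [h2]
    exact sub_eq_sub_iff_sub_eq_sub.mp h1
  -- the kernel of ρ is a Lie ideal
  let I : LieIdeal K L :=
    { LinearMap.ker mul with
      lie_mem := by
        intro x m hm
        have hm' : mul m = 0 := hm
        have : mul ⁅x, m⁆ = 0 := by
          ext w
          simp [hrep x m w, hm']
        exact this }
  have hmemI : ∀ z : L, z ∈ I ↔ mul z = 0 := fun z => Iff.rfl
  rcases LieAlgebra.IsSimple.eq_bot_or_eq_top I with hbot | htop
  · -- kernel is trivial, so ⁅e, y⁆ = 0 for all y, so e is central, so e = 0
    have hez : ∀ y : L, ⁅e, y⁆ = 0 := by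
      intro y
      have : mul ⁅e, y⁆ = 0 := by
        ext w
        simp [hrep e y w, he]
      have : ⁅e, y⁆ ∈ I := this
      rwa [hbot, LieSubmodule.mem_bot] at this
    have hcenter : e ∈ LieAlgebra.center K L := by
      rw [LieModule.mem_maxTrivSubmodule]
      intro x
      rw [← lie_skew, hez x, neg_zero]
    rw [LieAlgebra.center_eq_bot, LieSubmodule.mem_bot] at hcenter
    have : ∀ y : L, y = 0 := by
      intro y
      have := he y
      rw [hcenter] at this
      simpa using this.symm
    exact LieAlgebra.IsSimple.non_abelian (R := K) (L := L)
      ⟨fun x y => by rw [this x, zero_lie]⟩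
  · -- kernel is everything, so mul = 0, so L is abelian, contradiction
    have hz : ∀ x : L, mul x = 0 := by
      intro x
      have : x ∈ I := htop ▸ LieSubmodule.mem_top x
      exact this
    exact LieAlgebra.IsSimple.non_abelian (R := K) (L := L)
      ⟨fun x y => by rw [← hcompat, hz x, LinearMap.zero_apply, hz y,
        LinearMap.zero_apply, sub_zero]⟩
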